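/- Define f : ℝ² → ℝ by f(z,λ) = (z² + λ²)(λz − 1)² and F : ℝ⁴ → ℝ² by F(x,y,z,λ) = (x² − y + y²·f(z,λ), λ). Then for every b > 0 and every λ ∈ ℝ, the fiber F⁻¹(b,λ) (as a topological subspace of ℝ⁴) is homeomorphic to the punctured cylinder {(u,v,a) ∈ ℝ³ : u² + v² = 1} \ {(0,1,0)}. In particular, all fibers of F over the open half-plane (0,∞)×ℝ are homeomorphic to one another. -/

import Mathlib

set_option maxHeartbeats 1000000

noncomputable def fwdMap (b : ℝ) (D : ℝ → ℝ) (z₀ : ℝ) : ℝ × ℝ × ℝ → ℝ × ℝ × ℝ :=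
  fun p =>
    (2 * p.1 / ((1 - D p.2.2 * p.2.1) + (p.2.1 + b * (1 + D p.2.2 * p.2.1))),
     ((p.2.1 + b * (1 + D p.2.2 * p.2.1)) - (1 - D p.2.2 * p.2.1)) /
       ((1 - D p.2.2 * p.2.1) + (p.2.1 + b * (1 + D p.2.2 * p.2.1))),
     p.2.2 - z₀)

noncomputable def bwdMap (b : ℝ) (D : ℝ → ℝ) (z₀ : ℝ) : ℝ × ℝ × ℝ → ℝ × ℝ × ℝ :=
  fun q =>
    (q.1 * (1 + 2 * b * D (z₀ + q.2.2)) /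
       ((1 + q.2.1) * D (z₀ + q.2.2) + (1 - q.2.1) * (1 + b * D (z₀ + q.2.2))),
     (1 + q.2.1 - b * (1 - q.2.1)) /
       ((1 + q.2.1) * D (z₀ + q.2.2) + (1 - q.2.1) * (1 + b * D (z₀ + q.2.2))),
     z₀ + q.2.2)

theorem key_homeo (b : ℝ) (hb : 0 < b) (D : ℝ → ℝ) (hDc : Continuous D)
    (hnn : ∀ z, 0 ≤ D z) (z₀ : ℝ) (hzero : ∀ z, D z = 0 ↔ z = z₀) :
    Nonempty
      (({p : ℝ × ℝ × ℝ | p.1 ^ 2 - p.2.1 + p.2.1 ^ 2 * (D p.2.2 + b * (D p.2.2) ^ 2) = b} :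
          Set (ℝ × ℝ × ℝ)) ≃ₜ
        ({p : ℝ × ℝ × ℝ | p.1 ^ 2 + p.2.1 ^ 2 = 1} \
          {((0 : ℝ), (1 : ℝ), (0 : ℝ))} : Set (ℝ × ℝ × ℝ))) := by
  -- basic facts
  have hx2 : ∀ x y d : ℝ, x ^ 2 - y + y ^ 2 * (d + b * d ^ 2) = b →
      x ^ 2 = (1 - d * y) * (y + b * (1 + d * y)) := by
    intro x y d h; linear_combination h
  have hSpos : ∀ x y d : ℝ, 0 ≤ d → x ^ 2 = (1 - d * y) * (y + b * (1 + d * y)) →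
      0 < (1 - d * y) + (y + b * (1 + d * y)) := by
    intro x y d hd hx
    rcases le_or_gt (1 - d * y) 0 with h | h
    · have hy : 0 < y := by
        by_contra hy
        push_neg at hy
        nlinarith [mul_nonpos_of_nonneg_of_nonpos hd hy]
      have hA : 0 < y + b * (1 + d * y) := by nlinarith
      have hw : 0 ≤ 1 - d * y := by nlinarith [sq_nonneg x]
      linarith
    · nlinarith [sq_nonneg x]
  have hEpos : ∀ u v a : ℝ, u ^ 2 + v ^ 2 = 1 → (u, v, a) ≠ ((0 : ℝ), (1 : ℝ), (0 : ℝ)) →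
      0 < (1 + v) * D (z₀ + a) + (1 - v) * (1 + b * D (z₀ + a)) := by
    intro u v a hm hne
    set d := D (z₀ + a) with hdd
    have hd : 0 ≤ d := hnn _
    have hv1 : v ≤ 1 := by nlinarith [sq_nonneg u]
    have hv2 : -1 ≤ v := by nlinarith [sq_nonneg u]
    have hbd : 0 < 1 + b * d := by nlinarith [mul_nonneg hb.le hd]
    have h1 : 0 ≤ (1 + v) * d := mul_nonneg (by linarith) hd
    have h2 : 0 ≤ (1 - v) * (1 + b * d) := mul_nonneg (by linarith) hbd.le
    rcases lt_or_eq_of_le (by linarith : (0:ℝ) ≤ (1 + v) * d + (1 - v) * (1 + b * d)) with hE | hE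
    · exact hE
    · exfalso
      have h2' : (1 - v) * (1 + b * d) = 0 := by linarith
      have hv : v = 1 := by
        rcases mul_eq_zero.mp h2' with h | h
        · linarith
        · linarith
      have h1' : (1 + v) * d = 0 := by linarith
      have hd0 : d = 0 := by
        rcases mul_eq_zero.mp h1' with h | h
        · exfalso; rw [hv] at h; norm_num at h
        · exact h
      have ha : a = 0 := by
        have := (hzero (z₀ + a)).mp hd0
        linarith
      have hu : u = 0 := by
        have : u ^ 2 = 0 := by nlinarith
        exact pow_eq_zero_iff (by norm_num) |>.mp this
      exact hne (by rw [hu, hv, ha])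
  have hfwd : ∀ p : ℝ × ℝ × ℝ,
      p ∈ {p : ℝ × ℝ × ℝ | p.1 ^ 2 - p.2.1 + p.2.1 ^ 2 * (D p.2.2 + b * (D p.2.2) ^ 2) = b} →
      fwdMap b D z₀ p ∈ ({p : ℝ × ℝ × ℝ | p.1 ^ 2 + p.2.1 ^ 2 = 1} \
        {((0 : ℝ), (1 : ℝ), (0 : ℝ))} : Set (ℝ × ℝ × ℝ)) := by
    rintro ⟨x, y, z⟩ hm
    simp only [Set.mem_setOf_eq] at hm
    have hx := hx2 x y (D z) hm
    have hS := hSpos x y (D z) (hnn _) hx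
    constructor
    · simp only [fwdMap, Set.mem_setOf_eq]
      field_simp
      linear_combination 4 * hx
    · simp only [fwdMap, Set.mem_singleton_iff, Prod.mk.injEq, not_and]
      intro h1 h2 h3
      have hz : z = z₀ := by linarith
      have hd0 : D z = 0 := (hzero _).mpr hz
      rw [hd0] at h2 hS
      rw [div_eq_one_iff_eq (by linarith)] at h2
      linarith
  have hbwd : ∀ q : ℝ × ℝ × ℝ,
      q ∈ ({p : ℝ × ℝ × ℝ | p.1 ^ 2 + p.2.1 ^ 2 = 1} \
        {((0 : ℝ), (1 : ℝ), (0 : ℝ))} : Set (ℝ × ℝ × ℝ)) →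
      bwdMap b D z₀ q ∈ {p : ℝ × ℝ × ℝ | p.1 ^ 2 - p.2.1 + p.2.1 ^ 2 * (D p.2.2 + b * (D p.2.2) ^ 2) = b} := by
    rintro ⟨u, v, a⟩ ⟨hm1, hm2⟩
    have hm : u ^ 2 + v ^ 2 = 1 := hm1
    have hne : ((u, v, a) : ℝ × ℝ × ℝ) ≠ ((0 : ℝ), (1 : ℝ), (0 : ℝ)) := hm2
    have hE := hEpos u v a hm hne
    simp only [Set.mem_setOf_eq, bwdMap]
    set d := D (z₀ + a) with hdd
    field_simp
    rw [div_eq_iff (pow_pos (by linarith [hE]) 2).ne']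
    linear_combination (1 + 2 * b * d) ^ 2 * hm
  have hlinv : ∀ p : ℝ × ℝ × ℝ,
      p ∈ {p : ℝ × ℝ × ℝ | p.1 ^ 2 - p.2.1 + p.2.1 ^ 2 * (D p.2.2 + b * (D p.2.2) ^ 2) = b} →
      bwdMap b D z₀ (fwdMap b D z₀ p) = p := by
    rintro ⟨x, y, z⟩ hm
    simp only [Set.mem_setOf_eq] at hm
    have hx := hx2 x y (D z) hm
    have hS := hSpos x y (D z) (hnn _) hx
    have himg := hfwd (x, y, z) hm
    have hE' := hEpos _ _ _ himg.1 himg.2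
    simp only [fwdMap, bwdMap] at hE' ⊢
    rw [show z₀ + (z - z₀) = z by ring] at hE' ⊢
    have h2bd : (0:ℝ) < 1 + 2 * b * D z := by nlinarith [mul_nonneg hb.le (hnn z)]
    have h2bd' : (2 : ℝ) + b * D z * 4 ≠ 0 := by nlinarith
    simp only [Prod.mk.injEq]
    refine ⟨?_, ?_, trivial⟩
    · field_simp [h2bd.ne', h2bd']
      refine (div_eq_iff ?_).mpr ?_
      · exact ne_of_gt (by nlinarith [h2bd])
      · ring
    · generalize hEd : 1 - D z * y + (y + b * (1 + D z * y)) = e at hS ⊢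
      have he0 : e ≠ 0 := hS.ne'
      rw [div_eq_iff]
      · field_simp
        subst hEd
        ring
      · field_simp
        intro h
        rcases div_eq_zero_iff.mp h with h | h
        · subst hEd
          nlinarith [h2bd]
        · exact he0 h
  have hrinv : ∀ q : ℝ × ℝ × ℝ,
      q ∈ ({p : ℝ × ℝ × ℝ | p.1 ^ 2 + p.2.1 ^ 2 = 1} \
        {((0 : ℝ), (1 : ℝ), (0 : ℝ))} : Set (ℝ × ℝ × ℝ)) →
      fwdMap b D z₀ (bwdMap b D z₀ q) = q := by
    rintro ⟨u, v, a⟩ ⟨hm1, hm2⟩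
    have hm : u ^ 2 + v ^ 2 = 1 := hm1
    have hE := hEpos u v a hm hm2
    have hd : 0 ≤ D (z₀ + a) := hnn _
    have h2bd : (0:ℝ) < 1 + 2 * b * D (z₀ + a) := by nlinarith [mul_nonneg hb.le hd]
    have h2bd' : (2 : ℝ) + b * D (z₀ + a) * 4 ≠ 0 := by nlinarith
    simp only [fwdMap, bwdMap, Prod.mk.injEq]
    refine ⟨?_, ?_, by ring⟩
    · generalize hEd : (1 + v) * D (z₀ + a) + (1 - v) * (1 + b * D (z₀ + a)) = e at hE ⊢
      have he0 : e ≠ 0 := hE.ne'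
      rw [div_eq_iff]
      · field_simp
        subst hEd
        ring
      · field_simp
        intro h
        rcases div_eq_zero_iff.mp h with h | h
        · subst hEd
          nlinarith [h2bd]
        · exact he0 h
    · generalize hEd : (1 + v) * D (z₀ + a) + (1 - v) * (1 + b * D (z₀ + a)) = e at hE ⊢
      have he0 : e ≠ 0 := hE.ne'
      rw [div_eq_iff]
      · field_simp
        subst hEd
        ring
      · field_simp
        intro h
        rcases div_eq_zero_iff.mp h with h | h
        · subst hEd
          nlinarith [h2bd]
        · exact he0 h
  refine ⟨Homeomorph.mk ⟨fun p => ⟨fwdMap b D z₀ p.1, hfwd p.1 p.2⟩,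
      fun q => ⟨bwdMap b D z₀ q.1, hbwd q.1 q.2⟩,
      fun p => Subtype.ext (hlinv p.1 p.2),
      fun q => Subtype.ext (hrinv q.1 q.2)⟩ ?_ ?_⟩
  · apply Continuous.subtype_mk
    have hv : Continuous fun p : ↥{p : ℝ × ℝ × ℝ | p.1 ^ 2 - p.2.1 + p.2.1 ^ 2 * (D p.2.2 + b * (D p.2.2) ^ 2) = b} =>
        (p : ℝ × ℝ × ℝ) := continuous_subtype_val
    have hcx := continuous_fst.comp hv
    have hcy := (continuous_fst.comp continuous_snd).comp hv
    have hcz := (continuous_snd.comp continuous_snd).comp hv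
    have hcd := hDc.comp hcz
    have hcS : Continuous fun p : ↥{p : ℝ × ℝ × ℝ | p.1 ^ 2 - p.2.1 + p.2.1 ^ 2 * (D p.2.2 + b * (D p.2.2) ^ 2) = b} =>
        (1 - D (p : ℝ × ℝ × ℝ).2.2 * (p : ℝ × ℝ × ℝ).2.1) +
          ((p : ℝ × ℝ × ℝ).2.1 + b * (1 + D (p : ℝ × ℝ × ℝ).2.2 * (p : ℝ × ℝ × ℝ).2.1)) :=
      (continuous_const.sub (hcd.mul hcy)).add
        (hcy.add (continuous_const.mul (continuous_const.add (hcd.mul hcy))))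
    have hSne : ∀ p : ↥{p : ℝ × ℝ × ℝ | p.1 ^ 2 - p.2.1 + p.2.1 ^ 2 * (D p.2.2 + b * (D p.2.2) ^ 2) = b},
        (1 - D (p : ℝ × ℝ × ℝ).2.2 * (p : ℝ × ℝ × ℝ).2.1) +
          ((p : ℝ × ℝ × ℝ).2.1 + b * (1 + D (p : ℝ × ℝ × ℝ).2.2 * (p : ℝ × ℝ × ℝ).2.1)) ≠ 0 :=
      fun p => (hSpos _ _ _ (hnn _) (hx2 _ _ _ p.2)).ne'
    show Continuous fun p : ↥{p : ℝ × ℝ × ℝ | p.1 ^ 2 - p.2.1 + p.2.1 ^ 2 * (D p.2.2 + b * (D p.2.2) ^ 2) = b} =>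
      fwdMap b D z₀ (p : ℝ × ℝ × ℝ)
    unfold fwdMap
    exact ((continuous_const.mul hcx).div hcS hSne).prodMk
      ((((hcy.add (continuous_const.mul (continuous_const.add (hcd.mul hcy)))).sub
          (continuous_const.sub (hcd.mul hcy))).div hcS hSne).prodMk
        (hcz.sub continuous_const))
  · apply Continuous.subtype_mk
    have hv : Continuous fun q : ↥({p : ℝ × ℝ × ℝ | p.1 ^ 2 + p.2.1 ^ 2 = 1} \
        {((0 : ℝ), (1 : ℝ), (0 : ℝ))}) => (q : ℝ × ℝ × ℝ) := continuous_subtype_val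
    have hcu := continuous_fst.comp hv
    have hcv := (continuous_fst.comp continuous_snd).comp hv
    have hca := (continuous_snd.comp continuous_snd).comp hv
    have hcd : Continuous fun q : ↥({p : ℝ × ℝ × ℝ | p.1 ^ 2 + p.2.1 ^ 2 = 1} \
        {((0 : ℝ), (1 : ℝ), (0 : ℝ))}) => D (z₀ + (q : ℝ × ℝ × ℝ).2.2) :=
      hDc.comp (continuous_const.add hca)
    have hcE : Continuous fun q : ↥({p : ℝ × ℝ × ℝ | p.1 ^ 2 + p.2.1 ^ 2 = 1} \
        {((0 : ℝ), (1 : ℝ), (0 : ℝ))}) =>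
        (1 + (q : ℝ × ℝ × ℝ).2.1) * D (z₀ + (q : ℝ × ℝ × ℝ).2.2) +
          (1 - (q : ℝ × ℝ × ℝ).2.1) * (1 + b * D (z₀ + (q : ℝ × ℝ × ℝ).2.2)) :=
      ((continuous_const.add hcv).mul hcd).add
        ((continuous_const.sub hcv).mul (continuous_const.add (continuous_const.mul hcd)))
    have hEne : ∀ q : ↥({p : ℝ × ℝ × ℝ | p.1 ^ 2 + p.2.1 ^ 2 = 1} \
        {((0 : ℝ), (1 : ℝ), (0 : ℝ))}),
        (1 + (q : ℝ × ℝ × ℝ).2.1) * D (z₀ + (q : ℝ × ℝ × ℝ).2.2) +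
          (1 - (q : ℝ × ℝ × ℝ).2.1) * (1 + b * D (z₀ + (q : ℝ × ℝ × ℝ).2.2)) ≠ 0 :=
      fun q => (hEpos _ _ _ q.2.1 q.2.2).ne'
    show Continuous fun q : ↥({p : ℝ × ℝ × ℝ | p.1 ^ 2 + p.2.1 ^ 2 = 1} \
        {((0 : ℝ), (1 : ℝ), (0 : ℝ))}) => bwdMap b D z₀ (q : ℝ × ℝ × ℝ)
    unfold bwdMap
    exact ((hcu.mul (continuous_const.add (continuous_const.mul hcd))).div hcE hEne).prodMk
      ((((continuous_const.add hcv).sub (continuous_const.mul (continuous_const.sub hcv))).div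
          hcE hEne).prodMk (continuous_const.add hca))
/-- For `f(z,λ) = (z² + λ²)(λz − 1)²` and
`F(x,y,z,λ) = (x² − y + y²f(z,λ), λ)`, every fiber `F⁻¹(b,λ)` with `b > 0` is
homeomorphic to the punctured cylinder `{(u,v,a) : u² + v² = 1} \ {(0,1,0)}`. -/
theorem stmt_5 (f : ℝ × ℝ → ℝ)
    (hf : ∀ z l : ℝ, f (z, l) = (z ^ 2 + l ^ 2) * (l * z - 1) ^ 2)
    (F : ℝ × ℝ × ℝ × ℝ → ℝ × ℝ)
    (hF : ∀ x y z l : ℝ, F (x, y, z, l) = (x ^ 2 - y + y ^ 2 * f (z, l), l)) :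
    ∀ b l : ℝ, 0 < b →
      Nonempty ((F ⁻¹' {(b, l)}) ≃ₜ
        ({p : ℝ × ℝ × ℝ | p.1 ^ 2 + p.2.1 ^ 2 = 1} \
          {((0 : ℝ), (1 : ℝ), (0 : ℝ))} : Set (ℝ × ℝ × ℝ))) := by
  intro b l hb
  set z₀ : ℝ := if l = 0 then 0 else l⁻¹ with hz₀
  set c : ℝ → ℝ := fun z => (z ^ 2 + l ^ 2) * (l * z - 1) ^ 2 with hc
  have hcnn : ∀ z, 0 ≤ c z := fun z => by positivity
  have hczero : ∀ z, c z = 0 ↔ z = z₀ := by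
    intro z
    rcases eq_or_ne l 0 with hl | hl
    · have h1 : c z = z ^ 2 := by rw [hc]; simp only; rw [hl]; ring
      rw [h1, hz₀, if_pos hl]
      exact pow_eq_zero_iff (by norm_num : (2:ℕ) ≠ 0)
    · have hl2 : (0:ℝ) < l ^ 2 := (sq_nonneg l).lt_of_ne (Ne.symm (pow_ne_zero 2 hl))
      have hpos : (0:ℝ) < z ^ 2 + l ^ 2 := by nlinarith [sq_nonneg z]
      have h1 : c z = (z ^ 2 + l ^ 2) * (l * z - 1) ^ 2 := rfl
      rw [h1, hz₀, if_neg hl, mul_eq_zero]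
      constructor
      · rintro (h | h)
        · exact absurd h hpos.ne'
        · have h2 : l * z - 1 = 0 := (pow_eq_zero_iff (by norm_num : (2:ℕ) ≠ 0)).mp h
          field_simp
          linarith
      · intro h
        right
        rw [h, mul_inv_cancel₀ hl]
        norm_num
  set Df : ℝ → ℝ := fun z => 2 * c z / (1 + Real.sqrt (1 + 4 * b * c z)) with hDf
  have hsq : ∀ z, Real.sqrt (1 + 4 * b * c z) ^ 2 = 1 + 4 * b * c z := by
    intro z
    refine Real.sq_sqrt ?_
    nlinarith [hcnn z, mul_nonneg hb.le (hcnn z)]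
  have hden : ∀ z, (0:ℝ) < 1 + Real.sqrt (1 + 4 * b * c z) := by
    intro z
    nlinarith [Real.sqrt_nonneg (1 + 4 * b * c z)]
  have hDnn : ∀ z, 0 ≤ Df z := fun z =>
    div_nonneg (by nlinarith [hcnn z]) (hden z).le
  have hD0 : ∀ z, Df z = 0 ↔ z = z₀ := by
    intro z
    rw [← hczero z]
    simp only [hDf]
    rw [div_eq_zero_iff]
    constructor
    · rintro (h | h)
      · linarith
      · exact absurd h (hden z).ne'
    · intro h; left; rw [h]; ring
  have hDc2 : ∀ z, c z = Df z + b * (Df z) ^ 2 := by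
    intro z
    have h := hsq z
    have hd := (hden z).ne'
    simp only [hDf]
    generalize Real.sqrt (1 + 4 * b * c z) = s at h hd ⊢
    field_simp
    linear_combination (c z) * h
  have hDcont : Continuous Df := by
    have hcc : Continuous c := by
      rw [hc]
      exact ((continuous_pow 2).add continuous_const).mul
        (((continuous_const.mul continuous_id).sub continuous_const).pow 2)
    apply Continuous.div
    · exact continuous_const.mul hcc
    · exact continuous_const.add
        (Real.continuous_sqrt.comp (continuous_const.add (continuous_const.mul hcc)))
    · exact fun z => (hden z).ne'
  obtain ⟨H⟩ := key_homeo b hb Df hDcont hDnn z₀ hD0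
  -- homeomorphism between the fiber and the 3d conic set
  have hmem : ∀ p : ℝ × ℝ × ℝ × ℝ, p ∈ F ⁻¹' {(b, l)} ↔
      (p.1 ^ 2 - p.2.1 + p.2.1 ^ 2 * (Df p.2.2.1 + b * (Df p.2.2.1) ^ 2) = b ∧ p.2.2.2 = l) := by
    intro p
    have := hF p.1 p.2.1 p.2.2.1 p.2.2.2
    constructor
    · intro h
      have h' : F p = (b, l) := h
      rw [this] at h'
      obtain ⟨h1, h2⟩ := Prod.mk.injEq .. ▸ h'
      refine ⟨?_, h2⟩
      rw [← hDc2]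
      simp only [hc]
      rw [h2] at h1
      rw [← hf p.2.2.1 l]
      exact h1
    · rintro ⟨h1, h2⟩
      show F p = (b, l)
      rw [this, h2]
      rw [← hDc2] at h1
      simp only [hc] at h1
      rw [← hf p.2.2.1 l] at h1
      rw [h1]
  have G : (F ⁻¹' {(b, l)}) ≃ₜ
      ({p : ℝ × ℝ × ℝ | p.1 ^ 2 - p.2.1 + p.2.1 ^ 2 * (Df p.2.2 + b * (Df p.2.2) ^ 2) = b} :
        Set (ℝ × ℝ × ℝ)) := by
    refine Homeomorph.mk ⟨fun p => ⟨(p.1.1, p.1.2.1, p.1.2.2.1), ((hmem p.1).mp p.2).1⟩,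
      fun q => ⟨(q.1.1, q.1.2.1, q.1.2.2, l), (hmem _).mpr ⟨q.2, rfl⟩⟩,
      fun p => Subtype.ext ?_, fun q => Subtype.ext rfl⟩ ?_ ?_
    · have h2 := ((hmem p.1).mp p.2).2
      simp [Prod.ext_iff, h2]
    · apply Continuous.subtype_mk
      exact (continuous_fst.comp continuous_subtype_val).prodMk
        (((continuous_fst.comp continuous_snd).comp continuous_subtype_val).prodMk
          ((continuous_fst.comp (continuous_snd.comp continuous_snd)).comp continuous_subtype_val))
    · apply Continuous.subtype_mk
      exact (continuous_fst.comp continuous_subtype_val).prodMk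
        (((continuous_fst.comp continuous_snd).comp continuous_subtype_val).prodMk
          (((continuous_snd.comp continuous_snd).comp continuous_subtype_val).prodMk
            continuous_const))
  exact ⟨G.trans H⟩
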